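/- For all x ∈ (0, π/2), 1/(π/2 − x) − 2/π + (1 − 4/π²)·x − (8/π³)·x² < tan(x) < 1/(π/2 − x) − 2/π + (1 − 4/π²)·x − (8/π³)·x² + (1/3 − 16/π⁴)·x³. -/

import Mathlib

open Real

private lemma mono_aux {f : ℝ → ℝ} (hf : Differentiable ℝ f)
    (hd : ∀ y : ℝ, 0 < y → 0 ≤ deriv f y) {x : ℝ} (hx : 0 ≤ x) : f 0 ≤ f x := by
  have h := monotoneOn_of_deriv_nonneg (convex_Ici (0:ℝ)) hf.continuous.continuousOn
    hf.differentiableOn (by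
      intro y hy
      rw [interior_Ici] at hy
      exact hd y hy)
  exact h Set.self_mem_Ici hx hx

private lemma sin_ge_cubic (x : ℝ) (hx : 0 ≤ x) : x - x^3/6 ≤ sin x := by
  have hder : ∀ y : ℝ, HasDerivAt (fun t => sin t - (t - t^3/6)) (cos y - (1 - y^2/2)) y := by
    intro y
    have h2 : HasDerivAt (fun t : ℝ => t - t^3/6) (1 - y^2/2) y := by
      have h3 := (hasDerivAt_id y).sub ((hasDerivAt_pow 3 y).div_const 6)
      refine h3.congr_deriv ?_
      push_cast; ring
    exact (Real.hasDerivAt_sin y).sub h2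
  have h := mono_aux (f := fun t => sin t - (t - t^3/6))
    (fun y => (hder y).differentiableAt)
    (fun y _ => by
      rw [(hder y).deriv]
      have := Real.one_sub_sq_div_two_le_cos (x := y)
      linarith) hx
  simp at h
  linarith

private lemma cos_le_quartic (x : ℝ) (hx : 0 ≤ x) : cos x ≤ 1 - x^2/2 + x^4/24 := by
  have hder : ∀ y : ℝ, HasDerivAt (fun t => (1 - t^2/2 + t^4/24) - cos t)
      ((- y + y^3/6) + sin y) y := by
    intro y
    have h2 : HasDerivAt (fun t : ℝ => 1 - t^2/2 + t^4/24) (- y + y^3/6) y := by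
      have h3 := (((hasDerivAt_const y (1:ℝ)).sub ((hasDerivAt_pow 2 y).div_const 2)).add
        ((hasDerivAt_pow 4 y).div_const 24))
      refine h3.congr_deriv ?_
      push_cast; ring
    have h4 := h2.sub (Real.hasDerivAt_cos y)
    refine h4.congr_deriv ?_
    ring
  have h := mono_aux (f := fun t => (1 - t^2/2 + t^4/24) - cos t)
    (fun y => (hder y).differentiableAt)
    (fun y hy => by
      rw [(hder y).deriv]
      have := sin_ge_cubic y hy.le
      linarith) hx
  simp at h
  linarith

private lemma sin_le_quintic (x : ℝ) (hx : 0 ≤ x) : sin x ≤ x - x^3/6 + x^5/120 := by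
  have hder : ∀ y : ℝ, HasDerivAt (fun t => (t - t^3/6 + t^5/120) - sin t)
      ((1 - y^2/2 + y^4/24) - cos y) y := by
    intro y
    have h2 : HasDerivAt (fun t : ℝ => t - t^3/6 + t^5/120) (1 - y^2/2 + y^4/24) y := by
      have h3 := (((hasDerivAt_id y).sub ((hasDerivAt_pow 3 y).div_const 6)).add
        ((hasDerivAt_pow 5 y).div_const 120))
      refine h3.congr_deriv ?_
      push_cast; ring
    exact h2.sub (Real.hasDerivAt_sin y)
  have h := mono_aux (f := fun t => (t - t^3/6 + t^5/120) - sin t)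
    (fun y => (hder y).differentiableAt)
    (fun y hy => by
      rw [(hder y).deriv]
      have := cos_le_quartic y hy.le
      linarith) hx
  simp at h
  linarith

private lemma cos_ge_sextic (x : ℝ) (hx : 0 ≤ x) :
    1 - x^2/2 + x^4/24 - x^6/720 ≤ cos x := by
  have hder : ∀ y : ℝ, HasDerivAt (fun t => cos t - (1 - t^2/2 + t^4/24 - t^6/720))
      ((y - y^3/6 + y^5/120) - sin y) y := by
    intro y
    have h2 : HasDerivAt (fun t : ℝ => 1 - t^2/2 + t^4/24 - t^6/720)
        (- y + y^3/6 - y^5/120) y := by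
      have h3 := ((((hasDerivAt_const y (1:ℝ)).sub ((hasDerivAt_pow 2 y).div_const 2)).add
        ((hasDerivAt_pow 4 y).div_const 24)).sub ((hasDerivAt_pow 6 y).div_const 720))
      refine h3.congr_deriv ?_
      push_cast; ring
    have h4 := (Real.hasDerivAt_cos y).sub h2
    refine h4.congr_deriv ?_
    ring
  have h := mono_aux (f := fun t => cos t - (1 - t^2/2 + t^4/24 - t^6/720))
    (fun y => (hder y).differentiableAt)
    (fun y hy => by
      rw [(hder y).deriv]
      have := sin_le_quintic y hy.le
      linarith) hx
  simp at h
  linarith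

private lemma pi_sq_bounds : (9.8696:ℝ) ≤ π^2 ∧ π^2 ≤ 9.8696066 := by
  have h1 := Real.pi_gt_d6
  have h2 := Real.pi_lt_d6
  constructor <;> nlinarith

private lemma pi_cube_bounds : (31.00625:ℝ) ≤ π^3 ∧ π^3 ≤ 31.006303 := by
  have h1 := Real.pi_gt_d6
  have h2 := Real.pi_lt_d6
  have h0 : (0:ℝ) < π := by linarith
  obtain ⟨h3, h4⟩ := pi_sq_bounds
  have hu : π^2 * π ≤ 9.8696066 * 3.141593 :=
    mul_le_mul h4 h2.le h0.le (by norm_num)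
  have hl : 9.8696 * 3.141592 ≤ π^2 * π :=
    mul_le_mul h3 h1.le (by norm_num) (by positivity)
  constructor <;> nlinarith

private lemma pi_four_bounds : (97.40898:ℝ) ≤ π^4 ∧ π^4 ≤ 97.40914 := by
  obtain ⟨h3, h4⟩ := pi_sq_bounds
  have hu : π^2 * π^2 ≤ 9.8696066 * 9.8696066 :=
    mul_le_mul h4 h4 (sq_nonneg π) (by norm_num)
  have hl : 9.8696 * 9.8696 ≤ π^2 * π^2 :=
    mul_le_mul h3 h3 (by norm_num) (sq_nonneg π)
  constructor <;> nlinarith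

set_option maxHeartbeats 800000 in
private lemma tan_gt_cubic {x : ℝ} (hx0 : 0 < x) (hx2 : x < π/2) : x + x^3/3 < tan x := by
  have hcos : 0 < cos x := Real.cos_pos_of_mem_Ioo ⟨by linarith [Real.pi_pos], hx2⟩
  rw [Real.tan_eq_sin_div_cos, lt_div_iff₀ hcos]
  have h1 := sin_ge_cubic x hx0.le
  have h2 := cos_le_quartic x hx0.le
  have hx' : x < 1.5708 := by linarith [Real.pi_lt_d6]
  have h3 : (x + x^3/3) * cos x ≤ (x + x^3/3) * (1 - x^2/2 + x^4/24) :=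
    mul_le_mul_of_nonneg_left h2 (by positivity)
  have hx2' : x^2 < 2.4675 := by nlinarith
  have h4 : x^5 * x^2 < x^5 * 2.4675 := mul_lt_mul_of_pos_left hx2' (pow_pos hx0 5)
  nlinarith [pow_pos hx0 5]

set_option maxHeartbeats 1000000 in
private lemma id_lower {x : ℝ} (hπne : π ≠ 0) (hune : π/2 - x ≠ 0) (hp2xne : π - 2*x ≠ 0) :
    1 / (π / 2 - x) - 2 / π + (1 - 4 / π ^ 2) * x - (8 / π ^ 3) * x ^ 2
      = x + 16*x^3/(π^3*(π - 2*x)) := by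
  field_simp
  ring

set_option maxHeartbeats 1000000 in
private lemma id_upper {x : ℝ} (hπne : π ≠ 0) (hune : π/2 - x ≠ 0) (hp2xne : π - 2*x ≠ 0) :
    1 / (π / 2 - x) - 2 / π + (1 - 4 / π ^ 2) * x - (8 / π ^ 3) * x ^ 2 +
      (1 / 3 - 16 / π ^ 4) * x ^ 3 = x + x^3/3 + 32*x^4/(π^4*(π - 2*x)) := by
  field_simp
  ring

set_option maxHeartbeats 1600000 in
private lemma e_lowerB {u : ℝ} (hπne : π ≠ 0) (hu : u ≠ 0) :
    (1 - u^2/2 + u^4/24 - u^6/720)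
      - (1/u - 2/π + (1 - 4/π^2)*(π/2 - u) - (8/π^3)*(π/2 - u)^2) * (u - u^3/6 + u^5/120)
      = u * (6*π^2 - π^4/2 + u*(2*π^3/3 - 12*π) + u^2*(8 - π^2 + π^4/12)
      + u^3*(2*π - 2*π^3/15) + u^4*(-4/3 + π^2/20 - π^4/240)
      + u^5*(π^3/144 - π/10) + u^6/15) / π^3 := by
  field_simp
  ring

set_option maxHeartbeats 1600000 in
private lemma e_upperA {x : ℝ} (hπne : π ≠ 0) (hp2xne : π - 2*x ≠ 0) :
    (x + x^3/3 + 32*x^4/(π^4*(π - 2*x))) * (1 - x^2/2 + x^4/24 - x^6/720)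
      - (x - x^3/6 + x^5/120)
      = x^4 * (32*(1 - x^2/2 + x^4/24 - x^6/720)
        - π^4*(π - 2*x)*(2*x/15 - x^3/80 + x^5/2160))
        / (π^4*(π - 2*x)) := by
  generalize π - 2*x = d at hp2xne ⊢
  field_simp
  ring

set_option maxHeartbeats 1000000 in
private lemma keyH {u : ℝ} (hu : 0 < u) (hub : u < 0.791) :
    0 < 6*π^2 - π^4/2 + u*(2*π^3/3 - 12*π) + u^2*(8 - π^2 + π^4/12)
      + u^3*(2*π - 2*π^3/15) + u^4*(-4/3 + π^2/20 - π^4/240)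
      + u^5*(π^3/144 - π/10) + u^6/15 := by
  have hπ := Real.pi_gt_d6
  have hπ' := Real.pi_lt_d6
  obtain ⟨hsq_l, hsq_u⟩ := pi_sq_bounds
  obtain ⟨hcb_l, hcb_u⟩ := pi_cube_bounds
  obtain ⟨hft_l, hft_u⟩ := pi_four_bounds
  have hc0 : (10.513:ℝ) ≤ 6*π^2 - π^4/2 := by linarith
  have hc1 : (-17.029:ℝ) ≤ 2*π^3/3 - 12*π := by linarith
  have hc2 : (6.2478:ℝ) ≤ 8 - π^2 + π^4/12 := by linarith
  have hc3 : (2.149:ℝ) ≤ 2*π - 2*π^3/15 := by linarith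
  have hc4 : (-1.24573:ℝ) ≤ -4/3 + π^2/20 - π^4/240 := by linarith
  have hc5 : (-0.0989:ℝ) ≤ π^3/144 - π/10 := by linarith
  have e1 : u*(-17.029) ≤ u*(2*π^3/3 - 12*π) := mul_le_mul_of_nonneg_left hc1 hu.le
  have e2 : u^2*(6.2478:ℝ) ≤ u^2*(8 - π^2 + π^4/12) :=
    mul_le_mul_of_nonneg_left hc2 (by positivity)
  have e3 : u^3*(2.149:ℝ) ≤ u^3*(2*π - 2*π^3/15) :=
    mul_le_mul_of_nonneg_left hc3 (by positivity)
  have e4 : u^4*(-1.24573:ℝ) ≤ u^4*(-4/3 + π^2/20 - π^4/240) :=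
    mul_le_mul_of_nonneg_left hc4 (by positivity)
  have e5 : u^5*(-0.0989:ℝ) ≤ u^5*(π^3/144 - π/10) :=
    mul_le_mul_of_nonneg_left hc5 (by positivity)
  have hb : (0:ℝ) ≤ 0.791 - u := by linarith
  have hpoly : (0:ℝ) < 10.513 + u*(-17.029) + u^2*6.2478 + u^3*2.149
      + u^4*(-1.24573) + u^5*(-0.0989) := by
    nlinarith [mul_nonneg hb hb, mul_nonneg (mul_nonneg (mul_nonneg hu.le hu.le) hu.le) hb,
      mul_nonneg (mul_nonneg (mul_nonneg (mul_nonneg hu.le hu.le) hu.le) hu.le) hb,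
      mul_nonneg hu.le hb, mul_nonneg (mul_nonneg hu.le hu.le) hb]
  have h6 : (0:ℝ) ≤ u^6/15 := by positivity
  linarith

set_option maxHeartbeats 1000000 in
private lemma keyK {x : ℝ} (hx : 0 < x) (hc : x ≤ 1.3) (hp2x : 0 < π - 2*x) :
    (0:ℝ) < 32*(1 - x^2/2 + x^4/24 - x^6/720)
      - π^4*(π - 2*x)*(2*x/15 - x^3/80 + x^5/2160) := by
  have hπ' := Real.pi_lt_d6
  obtain ⟨hft_l, hft_u⟩ := pi_four_bounds
  have hq : (0:ℝ) ≤ 2*x/15 - x^3/80 + x^5/2160 := by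
    nlinarith [mul_nonneg (mul_nonneg hx.le hx.le) hx.le,
      mul_nonneg (mul_nonneg (mul_nonneg hx.le hx.le) hx.le) (mul_nonneg hx.le hx.le)]
  have hbd : π^4*(π - 2*x) ≤ 97.40914*(3.141593 - 2*x) :=
    mul_le_mul (by linarith) (by linarith) hp2x.le (by norm_num)
  have hbb : π^4*(π - 2*x)*(2*x/15 - x^3/80 + x^5/2160)
      ≤ 97.40914*(3.141593 - 2*x)*(2*x/15 - x^3/80 + x^5/2160) :=
    mul_le_mul_of_nonneg_right hbd hq
  have hb : (0:ℝ) ≤ 1.3 - x := by linarith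
  have knum : (0:ℝ) < 32*(1 - x^2/2 + x^4/24 - x^6/720)
      - 97.40914*(3.141593 - 2*x)*(2*x/15 - x^3/80 + x^5/2160) := by
    nlinarith [mul_nonneg (mul_nonneg (mul_nonneg hb hb) hb) hx.le,
      mul_nonneg (mul_nonneg (mul_nonneg (mul_nonneg hb hb) hb) hb) hx.le,
      mul_nonneg hb hx.le, mul_nonneg hb hb,
      mul_nonneg (mul_nonneg hb hb) hb,
      mul_nonneg (mul_nonneg (mul_nonneg hb hb) hb) hb]
  linarith

set_option maxHeartbeats 1000000 in
private lemma keyN {y : ℝ} (h13 : (1.3:ℝ) ≤ y) (hy2 : y < π/2) :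
    (0:ℝ) < -6*π^3 + 3*(π^4 - 4*π^2)*y - 24*π*y^2 + (π^4 - 48)*y^3 := by
  have hπ := Real.pi_gt_d6
  have hπ' := Real.pi_lt_d6
  obtain ⟨hsq_l, hsq_u⟩ := pi_sq_bounds
  obtain ⟨hcb_l, hcb_u⟩ := pi_cube_bounds
  obtain ⟨hft_l, hft_u⟩ := pi_four_bounds
  have hy0 : (0:ℝ) ≤ y := by linarith
  have hyu : y ≤ 1.5708 := by linarith
  have t1 : 173.79*y ≤ 3*(π^4 - 4*π^2)*y :=
    mul_le_mul_of_nonneg_right (by linarith) hy0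
  have t2 : -24*π*y^2 ≥ -75.398232*y^2 := by
    have h9 : (0:ℝ) ≤ y^2 := sq_nonneg y
    nlinarith
  have t3 : 49.40898*y^3 ≤ (π^4 - 48)*y^3 := by
    have h9 : (0:ℝ) ≤ y^3 := by positivity
    exact mul_le_mul_of_nonneg_right (by linarith) h9
  have t0 : -6*π^3 ≥ -186.037818 := by linarith
  have npoly : (0:ℝ) < -186.037818 + 173.79*y - 75.398232*y^2 + 49.40898*y^3 := by
    nlinarith [mul_nonneg (sub_nonneg.2 h13) (sub_nonneg.2 h13),
      mul_nonneg (mul_nonneg (sub_nonneg.2 h13) (sub_nonneg.2 h13)) (sub_nonneg.2 h13)]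
  linarith

set_option maxHeartbeats 1000000 in
theorem tan_rational_bounds_2 (x : ℝ) (hx : x ∈ Set.Ioo 0 (π / 2)) :
    1 / (π / 2 - x) - 2 / π + (1 - 4 / π ^ 2) * x - (8 / π ^ 3) * x ^ 2 < tan x ∧
    tan x < 1 / (π / 2 - x) - 2 / π + (1 - 4 / π ^ 2) * x - (8 / π ^ 3) * x ^ 2 +
      (1 / 3 - 16 / π ^ 4) * x ^ 3 := by
  obtain ⟨hx0, hx2⟩ := hx
  have hπ := Real.pi_gt_d6
  have hπ' := Real.pi_lt_d6
  have hπ0 : (0:ℝ) < π := by linarith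
  have hπne : π ≠ 0 := ne_of_gt hπ0
  have hu0 : 0 < π/2 - x := by linarith
  have hune : π/2 - x ≠ 0 := ne_of_gt hu0
  have hp2x : 0 < π - 2*x := by linarith
  have hp2xne : π - 2*x ≠ 0 := ne_of_gt hp2x
  constructor
  · -- LOWER BOUND
    by_cases hc : x ≤ 0.78
    · rw [id_lower hπne hune hp2xne]
      have h1 : x + x^3/3 < tan x := tan_gt_cubic hx0 hx2
      obtain ⟨hcb_l, hcb_u⟩ := pi_cube_bounds
      obtain ⟨hft_l, hft_u⟩ := pi_four_bounds
      have hkey : (48:ℝ) ≤ π^3*(π - 2*x) := by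
        have hm : π^3 * x ≤ 31.006303 * 0.78 :=
          mul_le_mul hcb_u hc hx0.le (by norm_num)
        nlinarith
      have hx3 : (0:ℝ) ≤ x^3 := by positivity
      have h2 : 16*x^3/(π^3*(π-2*x)) ≤ x^3/3 := by
        rw [div_le_div_iff₀ (by positivity) (by norm_num)]
        nlinarith [mul_le_mul_of_nonneg_left hkey hx3]
      linarith
    · push_neg at hc
      obtain ⟨u, rfl⟩ : ∃ u, x = π/2 - u := ⟨π/2 - x, by ring⟩
      have hu0' : 0 < u := by linarith
      have huB : u < 0.791 := by linarith
      have htan : tan (π/2 - u) = cos u / sin u := by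
        rw [Real.tan_pi_div_two_sub, Real.tan_eq_sin_div_cos, inv_div]
      rw [htan, show π/2 - (π/2 - u) = u from by ring]
      have hsin_pos : 0 < sin u := Real.sin_pos_of_pos_of_lt_pi hu0' (by linarith)
      have hcos_nonneg : 0 ≤ cos u :=
        (Real.cos_pos_of_mem_Ioo ⟨by linarith, by linarith⟩).le
      have h1 := cos_ge_sextic u hu0'.le
      have h2 := sin_le_quintic u hu0'.le
      have hsup_pos : 0 < u - u^3/6 + u^5/120 := by
        nlinarith [mul_pos hu0' hu0', mul_pos (mul_pos hu0' hu0') hu0']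
      have h3 : (1 - u^2/2 + u^4/24 - u^6/720)/(u - u^3/6 + u^5/120) ≤ cos u / sin u :=
        div_le_div₀ hcos_nonneg h1 hsin_pos h2
      have h4 : 1/u - 2/π + (1 - 4/π^2)*(π/2 - u) - (8/π^3)*(π/2 - u)^2
          < (1 - u^2/2 + u^4/24 - u^6/720)/(u - u^3/6 + u^5/120) := by
        rw [lt_div_iff₀ hsup_pos]
        have e := e_lowerB hπne (ne_of_gt hu0')
        have key := keyH hu0' huB
        have hpos : 0 < u * (6*π^2 - π^4/2 + u*(2*π^3/3 - 12*π) + u^2*(8 - π^2 + π^4/12)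
            + u^3*(2*π - 2*π^3/15) + u^4*(-4/3 + π^2/20 - π^4/240)
            + u^5*(π^3/144 - π/10) + u^6/15) / π^3 :=
          div_pos (mul_pos hu0' key) (by positivity)
        linarith
      linarith
  · -- UPPER BOUND
    by_cases hc : x ≤ 1.3
    · rw [id_upper hπne hune hp2xne]
      have hsin : sin x ≤ x - x^3/6 + x^5/120 := sin_le_quintic x hx0.le
      have hcos : 1 - x^2/2 + x^4/24 - x^6/720 ≤ cos x := cos_ge_sextic x hx0.le
      have hb13 : (0:ℝ) ≤ 1.3 - x := by linarith
      have hclow_pos : 0 < 1 - x^2/2 + x^4/24 - x^6/720 := by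
        nlinarith [mul_nonneg hb13 hb13, mul_nonneg (mul_nonneg hb13 hb13) hx0.le,
          mul_nonneg (mul_nonneg hb13 hb13) (mul_nonneg hb13 hb13)]
      have hsin_nonneg : 0 ≤ sin x := (Real.sin_pos_of_pos_of_lt_pi hx0 (by linarith)).le
      have hsup_nonneg : 0 ≤ x - x^3/6 + x^5/120 := le_trans hsin_nonneg hsin
      have h3 : tan x ≤ (x - x^3/6 + x^5/120)/(1 - x^2/2 + x^4/24 - x^6/720) := by
        rw [Real.tan_eq_sin_div_cos]
        exact div_le_div₀ hsup_nonneg hsin hclow_pos hcos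
      have h4 : (x - x^3/6 + x^5/120)/(1 - x^2/2 + x^4/24 - x^6/720)
          < x + x^3/3 + 32*x^4/(π^4*(π - 2*x)) := by
        rw [div_lt_iff₀ hclow_pos]
        have e := e_upperA hπne hp2xne
        have key := keyK hx0 hc hp2x
        have hpos : 0 < x^4 * (32*(1 - x^2/2 + x^4/24 - x^6/720)
            - π^4*(π - 2*x)*(2*x/15 - x^3/80 + x^5/2160)) / (π^4*(π - 2*x)) :=
          div_pos (mul_pos (by positivity) key) (by positivity)
        linarith
      linarith
    · push_neg at hc
      obtain ⟨u, rfl⟩ : ∃ u, x = π/2 - u := ⟨π/2 - x, by ring⟩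
      have hu0' : 0 < u := by linarith
      have huB : u < 0.271 := by linarith
      have htan : tan (π/2 - u) = cos u / sin u := by
        rw [Real.tan_pi_div_two_sub, Real.tan_eq_sin_div_cos, inv_div]
      rw [htan, show π/2 - (π/2 - u) = u from by ring]
      have hsin_pos : 0 < sin u := Real.sin_pos_of_pos_of_lt_pi hu0' (by linarith)
      have hcos_pos : 0 < cos u := Real.cos_pos_of_mem_Ioo ⟨by linarith, by linarith⟩
      have hltu : u < tan u := Real.lt_tan hu0' (by linarith)
      have h1 : cos u / sin u < 1/u := by
        rw [div_lt_div_iff₀ hsin_pos hu0']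
        rw [Real.tan_eq_sin_div_cos, lt_div_iff₀ hcos_pos] at hltu
        linarith
      have hN := keyN (y := π/2 - u) hc.le (by linarith)
      have hP3 : 0 < - 2/π + (1 - 4/π^2)*(π/2 - u) - (8/π^3)*(π/2 - u)^2
          + (1/3 - 16/π^4)*(π/2 - u)^3 := by
        have e2 : - 2/π + (1 - 4/π^2)*(π/2 - u) - (8/π^3)*(π/2 - u)^2
            + (1/3 - 16/π^4)*(π/2 - u)^3
            = (-6*π^3 + 3*(π^4 - 4*π^2)*(π/2 - u) - 24*π*(π/2 - u)^2
              + (π^4 - 48)*(π/2 - u)^3) / (3*π^4) := by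
          field_simp
          ring
        rw [e2]
        exact div_pos hN (by positivity)
      calc cos u / sin u < 1/u := h1
        _ ≤ 1/u + (- 2/π + (1 - 4/π^2)*(π/2 - u) - (8/π^3)*(π/2 - u)^2
            + (1/3 - 16/π^4)*(π/2 - u)^3) := le_add_of_nonneg_right hP3.le
        _ = 1/u - 2/π + (1 - 4/π^2)*(π/2 - u) - 8/π^3*(π/2 - u)^2
            + (1/3 - 16/π^4)*(π/2 - u)^3 := by ring
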